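/- Consider the coupled ODE system u'(t) = W u(t) + L f(x(t)), x'(t) = Lᵀ u(t), where u : ℝ → ℝᵖ, x : ℝ → ℝˡ, W is a p×p real matrix, L is a p×l real matrix, and f(x) = -∇E(x) for a differentiable nonnegative energy functional E : ℝˡ → ℝ. If W + Wᵀ is negative semi-definite, then the Lyapunov functional V(u,x) = ½‖u‖² + E(x) is non-increasing along every solution, i.e., d/dt V(u(t), x(t)) ≤ 0. -/

import Mathlib

open Matrix

/-- Stability of the coupled latent-variable ODE system (Theorem 2.1):
if `W + Wᵀ` is negative semi-definite and `f = -∇E` with `E ≥ 0`, then the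
Lyapunov functional `V = ½‖u‖² + E(x)` is non-increasing along solutions. -/
theorem stmt_0 {p l : ℕ}
    (W : Matrix (Fin p) (Fin p) ℝ) (L : Matrix (Fin p) (Fin l) ℝ)
    (E : (Fin l → ℝ) → ℝ) (f : (Fin l → ℝ) → (Fin l → ℝ))
    (hE : Differentiable ℝ E) (hEnn : ∀ x, 0 ≤ E x)
    (hf : ∀ x v, f x ⬝ᵥ v = -(fderiv ℝ E x v))
    (hW : ∀ v : Fin p → ℝ, v ⬝ᵥ (W + Wᵀ).mulVec v ≤ 0)
    (u : ℝ → Fin p → ℝ) (x : ℝ → Fin l → ℝ)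
    (u' : ℝ → Fin p → ℝ) (x' : ℝ → Fin l → ℝ)
    (hu : ∀ t, HasDerivAt u (u' t) t) (hx : ∀ t, HasDerivAt x (x' t) t)
    (hode1 : ∀ t, u' t = W.mulVec (u t) + L.mulVec (f (x t)))
    (hode2 : ∀ t, x' t = Lᵀ.mulVec (u t))
    (t : ℝ) :
    deriv (fun s => (1 / 2 : ℝ) * (u s ⬝ᵥ u s) + E (x s)) t ≤ 0 := by
  have hui : ∀ i, HasDerivAt (fun s => u s i) (u' t i) t := fun i =>
    (hasDerivAt_pi.1 (hu t)) i
  have hdot : HasDerivAt (fun s => u s ⬝ᵥ u s)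
      (u' t ⬝ᵥ u t + u t ⬝ᵥ u' t) t := by
    have : HasDerivAt (fun s => ∑ i, u s i * u s i)
        (∑ i, (u' t i * u t i + u t i * u' t i)) t :=
      HasDerivAt.fun_sum fun i _ => (hui i).mul (hui i)
    simpa [dotProduct, Finset.sum_add_distrib] using this
  have hEx : HasDerivAt (fun s => E (x s)) (fderiv ℝ E (x t) (x' t)) t :=
    (hE (x t)).hasFDerivAt.comp_hasDerivAt t (hx t)
  have hV : HasDerivAt (fun s => (1 / 2 : ℝ) * (u s ⬝ᵥ u s) + E (x s))
      ((1 / 2 : ℝ) * (u' t ⬝ᵥ u t + u t ⬝ᵥ u' t) + fderiv ℝ E (x t) (x' t)) t :=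
    ((hdot.const_mul _).add hEx)
  rw [hV.deriv]
  have hcomm : u' t ⬝ᵥ u t = u t ⬝ᵥ u' t := dotProduct_comm _ _
  have hfd : fderiv ℝ E (x t) (x' t) = -(f (x t) ⬝ᵥ x' t) := by
    rw [hf]; ring
  have hcancel : u t ⬝ᵥ L.mulVec (f (x t)) = f (x t) ⬝ᵥ Lᵀ.mulVec (u t) := by
    rw [mulVec_transpose, dotProduct_mulVec, dotProduct_comm]
  have key : (1 / 2 : ℝ) * (u' t ⬝ᵥ u t + u t ⬝ᵥ u' t) + fderiv ℝ E (x t) (x' t)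
      = (1 / 2 : ℝ) * (u t ⬝ᵥ (W + Wᵀ).mulVec (u t)) := by
    rw [hfd, hcomm, hode1, hode2]
    have h1 : u t ⬝ᵥ Wᵀ.mulVec (u t) = u t ⬝ᵥ W.mulVec (u t) := by
      rw [mulVec_transpose, dotProduct_mulVec, dotProduct_comm]
    simp only [add_mulVec, dotProduct_add, h1, hcancel]
    ring
  rw [key]
  have := hW (u t)
  linarith
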